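/- Let Ŵ and E be independent real random variables, exponentially distributed with means σ̂2² > 0 and σ_{e2}² > 0 respectively, and let P1, P2, N0 > 0, λ_P := P2/P1. Define X = Ŵ·P2/(Ŵ·P1 + E·(P1+P2) + N0) and ρ12 = P1·σ̂2²/N0. Then the cumulative distribution function of X satisfies: for 0 ≤ x < λ_P, P{X ≤ x} = 1 − (1 + x·(1+λ_P)/(λ_P − x) · σ_{e2}²/σ̂2²)^{−1} · exp( −x/((λ_P − x)·ρ12) ), and for x ≥ λ_P, P{X ≤ x} = 1. -/

import Mathlib

open MeasureTheory ProbabilityTheory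

/-- The law of an exponentially distributed random variable with mean `a`:
density `(1/a)·exp(−x/a)` with respect to Lebesgue measure on `[0, ∞)`. -/
noncomputable def expMean (a : ℝ) : Measure ℝ :=
  volume.withDensity fun x => ENNReal.ofReal (if 0 ≤ x then (1 / a) * Real.exp (-x / a) else 0)

lemma expMean_eq (a : ℝ) : expMean a = expMeasure (1 / a) := by
  rw [expMean, expMeasure, gammaMeasure]
  congr 1
  funext x
  show _ = gammaPDF 1 (1/a) x
  have : gammaPDF 1 (1/a) x = exponentialPDF (1/a) x := rfl
  rw [this, exponentialPDF_eq]
  congr 1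
  split_ifs with h
  · rw [show -x / a = -(1 / a * x) by ring]
  · rfl

lemma expMean_prob {a : ℝ} (ha : 0 < a) : IsProbabilityMeasure (expMean a) := by
  rw [expMean_eq]; exact isProbabilityMeasure_expMeasure (by positivity)

lemma expMeasure_Iic {r : ℝ} (hr : 0 < r) (t : ℝ) :
    expMeasure r (Set.Iic t) = ENNReal.ofReal (if 0 ≤ t then 1 - Real.exp (-(r * t)) else 0) := by
  rw [expMeasure, gammaMeasure, withDensity_apply _ measurableSet_Iic]
  exact lintegral_exponentialPDF_eq_antiDeriv hr t

lemma expMean_Iic {a : ℝ} (ha : 0 < a) (t : ℝ) :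
    expMean a (Set.Iic t) = ENNReal.ofReal (if 0 ≤ t then 1 - Real.exp (-(t / a)) else 0) := by
  rw [expMean_eq, expMeasure_Iic (by positivity)]
  congr 1
  split_ifs with h
  · rw [show -(1 / a * t) = -(t / a) by ring]
  · rfl

lemma expMean_Ioi {a : ℝ} (ha : 0 < a) {t : ℝ} (ht : 0 ≤ t) :
    expMean a (Set.Ioi t) = ENNReal.ofReal (Real.exp (-(t / a))) := by
  have := expMean_prob ha
  have h1 : Real.exp (-(t / a)) ≤ 1 := by
    rw [Real.exp_le_one_iff]
    have : 0 ≤ t / a := by positivity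
    linarith
  rw [← Set.compl_Iic, measure_compl measurableSet_Iic (measure_ne_top _ _), measure_univ,
    expMean_Iic ha, if_pos ht, ← ENNReal.ofReal_one,
    ← ENNReal.ofReal_sub _ (by linarith [Real.exp_pos (-(t/a))])]
  congr 1
  ring

lemma expMean_Iio_zero (a : ℝ) : expMean a (Set.Iio 0) = 0 := by
  rw [expMean, withDensity_apply _ measurableSet_Iio]
  rw [setLIntegral_congr_fun measurableSet_Iio
    (fun y (hy : y < 0) => by
      rw [if_neg (by linarith), ENNReal.ofReal_zero])]
  simp


set_option maxHeartbeats 2000000 in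
/-- CDF formula (19): with `W = |ĥ2|²` and `E = |e2|²` independent
exponentials of means `σh2 = σ̂2²`, `σe2 = σ_{e2}²`, the CDF of
`X = W·P2/(W·P1 + E·(P1+P2) + N0)` is
`F_X(x) = 1 − (1 + x·(1+λ_P)/(λ_P−x)·σe2/σh2)⁻¹·exp(−x/((λ_P−x)·ρ12))` for
`0 ≤ x < λ_P`, and `F_X(x) = 1` for `x ≥ λ_P`, where `λ_P = P2/P1`,
`ρ12 = P1·σ̂2²/N0`. -/
theorem stmt_4 {Ω : Type*} [MeasurableSpace Ω] (P : Measure Ω) [IsProbabilityMeasure P]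
    (W E : Ω → ℝ) (σh2 σe2 P1 P2 N0 : ℝ)
    (hσh2 : 0 < σh2) (hσe2 : 0 < σe2)
    (hP1 : 0 < P1) (hP2 : 0 < P2) (hN0 : 0 < N0)
    (hind : IndepFun W E P)
    (hW : P.map W = expMean σh2) (hE : P.map E = expMean σe2)
    (lamP ρ12 : ℝ)
    (hlamP : lamP = P2 / P1) (hρ12 : ρ12 = P1 * σh2 / N0) (x : ℝ) :
    (0 ≤ x → x < lamP →
      (P {ω | W ω * P2 / (W ω * P1 + E ω * (P1 + P2) + N0) ≤ x}).toReal =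
        1 - (1 + x * (1 + lamP) / (lamP - x) * (σe2 / σh2))⁻¹ *
          Real.exp (-x / ((lamP - x) * ρ12))) ∧
    (lamP ≤ x →
      (P {ω | W ω * P2 / (W ω * P1 + E ω * (P1 + P2) + N0) ≤ x}).toReal = 1) := by
  have hWprob := expMean_prob hσh2
  have hEprob := expMean_prob hσe2
  have hWm : AEMeasurable W P := by
    by_contra h
    rw [Measure.map_of_not_aemeasurable h] at hW
    exact (IsProbabilityMeasure.ne_zero (expMean σh2)) hW.symm
  have hEm : AEMeasurable E P := by
    by_contra h
    rw [Measure.map_of_not_aemeasurable h] at hE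
    exact (IsProbabilityMeasure.ne_zero (expMean σe2)) hE.symm
  have hWnn : ∀ᵐ ω ∂P, 0 ≤ W ω := by
    rw [ae_iff]
    have : {ω | ¬ 0 ≤ W ω} = W ⁻¹' (Set.Iio 0) := by ext ω; simp [not_le]
    rw [this, ← Measure.map_apply_of_aemeasurable hWm measurableSet_Iio, hW,
      expMean_Iio_zero]
  have hEnn : ∀ᵐ ω ∂P, 0 ≤ E ω := by
    rw [ae_iff]
    have : {ω | ¬ 0 ≤ E ω} = E ⁻¹' (Set.Iio 0) := by ext ω; simp [not_le]
    rw [this, ← Measure.map_apply_of_aemeasurable hEm measurableSet_Iio, hE,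
      expMean_Iio_zero]
  constructor
  · intro hx hxl
    have hd' : 0 < P2 - x * P1 := by
      rw [hlamP, lt_div_iff₀ hP1] at hxl; linarith
    set d : ℝ := P2 - x * P1 with hd_def
    have hd : 0 < d := hd'
    set a : ℝ := x * (P1 + P2) / d with ha_def
    set b : ℝ := x * N0 / d with hb_def
    have ha_nn : 0 ≤ a := by rw [ha_def]; positivity
    have hb_nn : 0 ≤ b := by rw [hb_def]; positivity
    set k : ℝ := 1 / σe2 + a / σh2 with hk_def
    have hk : 0 < k := by
      have h1 : 0 ≤ a / σh2 := div_nonneg ha_nn hσh2.le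
      have h2 : 0 < 1 / σe2 := by positivity
      rw [hk_def]; linarith
    set C : ℝ := (1 / σe2) * Real.exp (-(b / σh2)) with hC_def
    have hC : 0 < C := by rw [hC_def]; positivity
    have hCk : C / k ≤ 1 := by
      rw [div_le_one hk, hC_def, hk_def]
      have h1 : Real.exp (-(b / σh2)) ≤ 1 := by
        rw [Real.exp_le_one_iff]
        have : 0 ≤ b / σh2 := div_nonneg hb_nn hσh2.le
        linarith
      have h2 : (1 : ℝ) / σe2 * Real.exp (-(b / σh2)) ≤ 1 / σe2 * 1 :=
        mul_le_mul_of_nonneg_left h1 (by positivity)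
      have : 0 ≤ a / σh2 := div_nonneg ha_nn hσh2.le
      linarith
    set T : Set (ℝ × ℝ) := {p : ℝ × ℝ | x * (p.2 * (P1 + P2) + N0) < p.1 * d} with hT_def
    have hTmeas : MeasurableSet T := by
      rw [hT_def]
      exact measurableSet_lt (by fun_prop) (by fun_prop)
    clear_value d a b k C T
    have hae : {ω | W ω * P2 / (W ω * P1 + E ω * (P1 + P2) + N0) ≤ x}
        =ᵐ[P] (((fun ω => (W ω, E ω)) ⁻¹' T)ᶜ : Set Ω) := by
      rw [Filter.eventuallyEq_set]
      filter_upwards [hWnn, hEnn] with ω h1 h2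
      have hden : 0 < W ω * P1 + E ω * (P1 + P2) + N0 := by
        have : 0 ≤ W ω * P1 := by positivity
        have : 0 ≤ E ω * (P1 + P2) := by positivity
        linarith
      have hWd : W ω * d = W ω * P2 - x * (W ω * P1) := by rw [hd_def]; ring
      have hmem : (ω ∈ (fun ω => (W ω, E ω)) ⁻¹' T) ↔
          x * (E ω * (P1 + P2) + N0) < W ω * d := by
        rw [Set.mem_preimage, hT_def]; exact Iff.rfl
      constructor
      · intro h
        have h' : W ω * P2 ≤ x * (W ω * P1 + E ω * (P1 + P2) + N0) :=
          (div_le_iff₀ hden).mp h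
        intro hmemT
        have hlt := hmem.mp hmemT
        nlinarith [h', hWd, hlt]
      · intro h
        have h' : ¬ (x * (E ω * (P1 + P2) + N0) < W ω * d) := fun hc => h (hmem.mpr hc)
        rw [not_lt] at h'
        show _ / _ ≤ x
        rw [div_le_iff₀ hden]
        nlinarith [h', hWd]
    have hmap : P.map (fun ω => (W ω, E ω)) = (expMean σh2).prod (expMean σe2) := by
      rw [← hW, ← hE]
      exact (indepFun_iff_map_prod_eq_prod_map_map hWm hEm).mp hind
    have hnull : NullMeasurableSet ((fun ω => (W ω, E ω)) ⁻¹' T) P :=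
      ((hWm.prodMk hEm).nullMeasurable) hTmeas
    have hpre : P ((fun ω => (W ω, E ω)) ⁻¹' T) = (expMean σh2).prod (expMean σe2) T := by
      rw [← hmap, Measure.map_apply_of_aemeasurable (hWm.prodMk hEm) hTmeas]
    have haeE : ∀ᵐ e ∂(expMean σe2), 0 ≤ e := by
      rw [ae_iff]
      have : {e : ℝ | ¬ 0 ≤ e} = Set.Iio 0 := by ext e; simp [not_le]
      rw [this, expMean_Iio_zero]
    have hslice : ∀ e : ℝ, ((fun w => (w, e)) ⁻¹' T) = Set.Ioi (a * e + b) := by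
      intro e
      have key : a * e + b = x * (e * (P1 + P2) + N0) / d := by
        rw [ha_def, hb_def]; field_simp
      ext w
      simp only [Set.mem_preimage, hT_def, Set.mem_setOf_eq, Set.mem_Ioi]
      rw [key, div_lt_iff₀ hd]
    have hdens : Measurable fun e : ℝ =>
        ENNReal.ofReal (if 0 ≤ e then (1 / σe2) * Real.exp (-e / σe2) else 0) := by
      apply Measurable.ennreal_ofReal
      exact Measurable.ite measurableSet_Ici (by fun_prop) measurable_const
    have hG : Measurable fun e : ℝ => ENNReal.ofReal (Real.exp (-((a * e + b) / σh2))) := by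
      fun_prop
    have hpdfmeas : Measurable (exponentialPDF k) :=
      (measurable_exponentialPDFReal k).ennreal_ofReal
    have hT : (expMean σh2).prod (expMean σe2) T = ENNReal.ofReal (C / k) := by
      rw [Measure.prod_apply_symm hTmeas]
      rw [lintegral_congr_ae (haeE.mono fun e he => by
        rw [hslice e, expMean_Ioi hσh2 (add_nonneg (mul_nonneg ha_nn he) hb_nn)])]
      rw [expMean, lintegral_withDensity_eq_lintegral_mul _ hdens hG]
      have hpt : ∀ e : ℝ,
          ((fun e => ENNReal.ofReal (if 0 ≤ e then (1 / σe2) * Real.exp (-e / σe2) else 0)) *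
            fun e => ENNReal.ofReal (Real.exp (-((a * e + b) / σh2)))) e
          = ENNReal.ofReal (C / k) * exponentialPDF k e := by
        intro e
        simp only [Pi.mul_apply]
        rcases le_or_gt 0 e with he | he
        · rw [if_pos he, exponentialPDF_of_nonneg he,
            ← ENNReal.ofReal_mul (by positivity), ← ENNReal.ofReal_mul (div_nonneg hC.le hk.le)]
          congr 1
          have hkne : k ≠ 0 := hk.ne'
          have hstep : C / k * (k * Real.exp (-(k * e))) = C * Real.exp (-(k * e)) := by
            field_simp
          rw [hstep, hC_def, mul_assoc, mul_assoc, ← Real.exp_add, ← Real.exp_add]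
          congr 1
          rw [hk_def]
          field_simp
          ring
        · rw [if_neg (not_le.mpr he), exponentialPDF_of_neg he, ENNReal.ofReal_zero,
            zero_mul, mul_zero]
      rw [lintegral_congr hpt, lintegral_const_mul _ hpdfmeas,
        lintegral_exponentialPDF_eq_one hk, mul_one]
    rw [measure_congr hae, measure_compl₀ hnull (measure_ne_top P _), measure_univ, hpre, hT]
    rw [← ENNReal.ofReal_one, ← ENNReal.ofReal_sub _ (div_nonneg hC.le hk.le),
      ENNReal.toReal_ofReal (by linarith)]
    have hlx : lamP - x > 0 := by linarith
    have hne1 : P2 - x * P1 ≠ 0 := by rw [← hd_def]; exact ne_of_gt hd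
    have hshow : lamP - x = (P2 - x * P1) / P1 := by
      rw [hlamP]; field_simp
    have harg : -x / ((lamP - x) * ρ12) = -(b / σh2) := by
      rw [hb_def, hd_def, hρ12, hshow]
      field_simp
    have hcoef : 1 + x * (1 + lamP) / (lamP - x) * (σe2 / σh2) = k * σe2 := by
      rw [hk_def, ha_def, hd_def, hshow, hlamP]
      field_simp
    rw [harg, hcoef]
    have hck : C / k = (k * σe2)⁻¹ * Real.exp (-(b / σh2)) := by
      rw [hC_def]
      ring
    rw [hck]
  · intro hxl
    have hx0 : 0 < x := lt_of_lt_of_le (by rw [hlamP]; positivity) hxl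
    have hxP : P2 ≤ x * P1 := by
      rw [hlamP, div_le_iff₀ hP1] at hxl; linarith
    have hae : ∀ᵐ ω ∂P, ω ∈ {ω | W ω * P2 / (W ω * P1 + E ω * (P1 + P2) + N0) ≤ x} := by
      filter_upwards [hWnn, hEnn] with ω h1 h2
      have hden : 0 < W ω * P1 + E ω * (P1 + P2) + N0 := by
        have : 0 ≤ W ω * P1 := by positivity
        have : 0 ≤ E ω * (P1 + P2) := by positivity
        linarith
      show _ / _ ≤ x
      rw [div_le_iff₀ hden]
      nlinarith [mul_le_mul_of_nonneg_left hxP h1,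
        mul_nonneg (mul_nonneg hx0.le h2) (by linarith : (0:ℝ) ≤ P1 + P2),
        mul_pos hx0 hN0]
    have : {ω | W ω * P2 / (W ω * P1 + E ω * (P1 + P2) + N0) ≤ x} =ᵐ[P] (Set.univ : Set Ω) := by
      rw [Filter.eventuallyEq_set]
      filter_upwards [hae] with ω h
      simp [h]
    rw [measure_congr this, measure_univ, ENNReal.toReal_one]
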